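/- Let w be an infinite word over {0,1} such that there is a constant C with |h(x) − h(y)| ≤ C for all factors x, y of w of equal length. Then the slope π(w) = lim_{n→∞} h(w(1,n))/n exists. -/

import Mathlib

open Filter Topology

/-- The set of factors (contiguous subwords) of length `n` of the infinite word `w`. -/
def Factors (w : ℕ → Fin 2) (n : ℕ) : Set (Fin n → Fin 2) :=
  {v | ∃ i : ℕ, ∀ j : Fin n, v j = w (i + j)}

/-- The complexity function: number of distinct factors of length `n`. -/
noncomputable def Comp (w : ℕ → Fin 2) (n : ℕ) : ℕ := (Factors w n).ncard

/-- The height of a finite word: the number of letters equal to `1`. -/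
def hcount {n : ℕ} (v : Fin n → Fin 2) : ℕ := (Finset.univ.filter fun j => v j = 1).card

/-- Number of `1`'s among `w 0, …, w (n-1)` (height of the prefix of length `n`). -/
def pcount (w : ℕ → Fin 2) (n : ℕ) : ℕ := ((Finset.range n).filter fun i => w i = 1).card

lemma hcount_prefix (w : ℕ → Fin 2) (n : ℕ) :
    hcount (fun j : Fin n => w j) = pcount w n := by
  classical
  unfold hcount pcount
  refine Finset.card_bij (fun j _ => (j : ℕ)) ?_ ?_ ?_
  · intro j hj
    simp only [Finset.mem_filter, Finset.mem_univ, true_and] at hj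
    simp [hj, j.isLt]
  · intro a ha b hb hab; exact Fin.ext hab
  · intro i hi
    simp only [Finset.mem_filter, Finset.mem_range] at hi
    exact ⟨⟨i, hi.1⟩, by simp [hi.2], rfl⟩

lemma pcount_add (w : ℕ → Fin 2) (m n : ℕ) :
    pcount w (m + n) = pcount w m + hcount (fun j : Fin n => w (m + j)) := by
  classical
  unfold pcount hcount
  rw [Finset.range_eq_Ico, Finset.range_eq_Ico, ← Finset.Ico_union_Ico_eq_Ico (Nat.zero_le m) (Nat.le_add_right m n),
    Finset.filter_union, Finset.card_union_of_disjoint]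
  · congr 1
    symm
    refine Finset.card_bij (fun j _ => m + (j : ℕ)) ?_ ?_ ?_
    · intro j hj
      simp only [Finset.mem_filter, Finset.mem_univ, true_and] at hj
      simp only [Finset.mem_filter, Finset.mem_Ico]
      exact ⟨⟨Nat.le_add_right _ _, by omega⟩, hj⟩
    · intro a _ b _ hab
      exact Fin.ext (by omega)
    · intro i hi
      simp only [Finset.mem_filter, Finset.mem_Ico] at hi
      refine ⟨⟨i - m, by omega⟩, ?_, ?_⟩
      · simp only [Finset.mem_filter, Finset.mem_univ, true_and]
        have : m + (i - m) = i := by omega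
        rw [this]; exact hi.2
      · simp only
        omega
  · exact Finset.disjoint_filter_filter (Finset.Ico_disjoint_Ico_consecutive 0 m (m + n))

/-- a word with bounded balance has a slope. -/
theorem slope_exists_of_balanced (w : ℕ → Fin 2) (C : ℝ)
    (hbal : ∀ n : ℕ, ∀ x y : Fin n → Fin 2, x ∈ Factors w n → y ∈ Factors w n →
      |(hcount x : ℝ) - (hcount y : ℝ)| ≤ C) :
    ∃ L : ℝ, Filter.Tendsto (fun n : ℕ => (pcount w n : ℝ) / n) Filter.atTop (nhds L) := by
  have hC : 0 ≤ C := by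
    have := hbal 0 (fun j => w j) (fun j => w j) ⟨0, fun j => by simp⟩ ⟨0, fun j => by simp⟩
    simpa using this
  set u : ℕ → ℝ := fun n => (pcount w n : ℝ) + C with hu
  have hsub : Subadditive u := by
    intro m n
    have hmem1 : (fun j : Fin n => w (m + j)) ∈ Factors w n := ⟨m, fun j => rfl⟩
    have hmem2 : (fun j : Fin n => w j) ∈ Factors w n := ⟨0, fun j => by simp⟩
    have hb := hbal n _ _ hmem1 hmem2
    rw [abs_sub_le_iff] at hb
    have key : (hcount (fun j : Fin n => w (m + j)) : ℝ) ≤ (pcount w n : ℝ) + C := by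
      have := hb.1
      rw [hcount_prefix] at this
      linarith
    have hadd := pcount_add w m n
    simp only [hu]
    push_cast [hadd]
    linarith
  have hbdd : BddBelow (Set.range fun n => u n / n) := by
    refine ⟨0, ?_⟩
    rintro x ⟨n, rfl⟩
    exact div_nonneg (by positivity) (Nat.cast_nonneg n)
  refine ⟨hsub.lim, ?_⟩
  have h1 := hsub.tendsto_lim hbdd
  have h2 : Tendsto (fun n : ℕ => C / n) atTop (nhds 0) :=
    tendsto_const_nhds.div_atTop tendsto_natCast_atTop_atTop
  have := h1.sub h2
  rw [sub_zero] at this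
  refine this.congr' ?_
  filter_upwards [eventually_ne_atTop 0] with n hn
  have : (n : ℝ) ≠ 0 := Nat.cast_ne_zero.2 hn
  field_simp [hu]
  simp [hu]
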